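/- Let K ⊆ ℕ_min^n be a finitely generated subsemimodule. Then for all matrices A ∈ ℕ_min^{n×n} and B ∈ ℕ_min^{n×q}, the maximal geometrically (A,B)-invariant semimodule K* contained in K equals X_ω = ⋂_{r≥1} X_r, where X₁ = K and X_{r+1} = φ(X_r). -/

import Mathlib

/-- The tropical matrix–vector product over `ℕ_min = (ℕ ∪ {+∞}, min, +)`:
`(Ax)_i = min_j (A_{ij} + x_j)`. -/
def minMulVec {m k : ℕ} (A : Matrix (Fin m) (Fin k) (WithTop ℕ))
    (x : Fin k → WithTop ℕ) : Fin m → WithTop ℕ :=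
  fun i => Finset.univ.inf fun j => A i j + x j

/-- A subsemimodule of `ℕ_min^n`: contains the zero vector `(+∞,…,+∞)`, is closed
under entrywise min, and under addition of a scalar to all entries. -/
def IsSubsemimoduleMin {m : ℕ} (X : Set (Fin m → WithTop ℕ)) : Prop :=
  (fun _ => ⊤) ∈ X ∧ (∀ x ∈ X, ∀ y ∈ X, x ⊓ y ∈ X) ∧
    ∀ (c : WithTop ℕ), ∀ x ∈ X, (fun i => c + x i) ∈ X

/-- `Kstar A B K`: the set of initial states `x₀` for which some control sequence
`u(k)`, `k ≥ 1`, makes the trajectory `x(0) = x₀`, `x(k) = min(A x(k−1), B u(k))`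
stay in `K` forever. -/
def KstarMin {n q : ℕ} (A : Matrix (Fin n) (Fin n) (WithTop ℕ))
    (B : Matrix (Fin n) (Fin q) (WithTop ℕ)) (K : Set (Fin n → WithTop ℕ)) :
    Set (Fin n → WithTop ℕ) :=
  {x₀ | ∃ (u : ℕ → Fin q → WithTop ℕ) (x : ℕ → Fin n → WithTop ℕ),
    x 0 = x₀ ∧ (∀ k : ℕ, x (k + 1) = minMulVec A (x k) ⊓ minMulVec B (u (k + 1))) ∧
    ∀ k : ℕ, x k ∈ K}

/-- `φ(X) = X ∩ A⁻¹(X ⊖ Im B)`, where `A⁻¹(Y) = {u : Au ∈ Y}` and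
`Z ⊖ Y = {u : ∃ y ∈ Y, min(u, y) ∈ Z}`. -/
def PhiMin {n q : ℕ} (A : Matrix (Fin n) (Fin n) (WithTop ℕ))
    (B : Matrix (Fin n) (Fin q) (WithTop ℕ)) (X : Set (Fin n → WithTop ℕ)) :
    Set (Fin n → WithTop ℕ) :=
  X ∩ {u | minMulVec A u ∈
    {w | ∃ y ∈ {v | ∃ z : Fin q → WithTop ℕ, v = minMulVec B z}, w ⊓ y ∈ X}}

/-- The sequence `X₁ = K`, `X_{r+1} = φ(X_r)`; here `XseqMin A B K r` is `X_{r+1}`. -/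
def XseqMin {n q : ℕ} (A : Matrix (Fin n) (Fin n) (WithTop ℕ))
    (B : Matrix (Fin n) (Fin q) (WithTop ℕ)) (K : Set (Fin n → WithTop ℕ)) :
    ℕ → Set (Fin n → WithTop ℕ)
  | 0 => K
  | r + 1 => PhiMin A B (XseqMin A B K r)

section Aux
open Classical

lemma wt_exists_eq_iInf {ι : Type*} [Nonempty ι] (f : ι → WithTop ℕ) :
    ∃ i, f i = ⨅ j, f j := by
  cases h : ⨅ j, f j with
  | top => exact ⟨Classical.arbitrary ι, le_antisymm le_top (h ▸ iInf_le f _)⟩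
  | coe m =>
    have h1 : ⨅ j, f j < (m : WithTop ℕ) + 1 := by
      rw [h]; exact (ENat.lt_add_one_iff (WithTop.coe_ne_top)).mpr le_rfl
    obtain ⟨i, hi⟩ := iInf_lt_iff.mp h1
    have hle : f i ≤ (m : WithTop ℕ) := (ENat.lt_add_one_iff (WithTop.coe_ne_top)).mp hi
    exact ⟨i, le_antisymm hle (h ▸ iInf_le f i)⟩

lemma wt_add_iInf {ι : Type*} [Nonempty ι] (a : WithTop ℕ) (f : ι → WithTop ℕ) :
    a + ⨅ i, f i = ⨅ i, a + f i := by
  obtain ⟨i0, hi0⟩ := wt_exists_eq_iInf f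
  refine le_antisymm (le_iInf fun i => add_le_add (le_refl a) (iInf_le f i)) ?_
  calc ⨅ i, a + f i ≤ a + f i0 := iInf_le _ i0
    _ = a + ⨅ j, f j := by rw [hi0]

end Aux

section Aux2
open Classical

variable {n p q k : ℕ}

local notation "Vec" n => Fin n → WithTop ℕ

/-- monotone binary sups in a frame -/
lemma frame_iSup_inf_iSup {α : Type*} [Order.Frame α] {a b : ℕ → α}
    (ha : Monotone a) (hb : Monotone b) :
    (⨆ i, a i) ⊓ (⨆ i, b i) = ⨆ i, a i ⊓ b i := by
  refine le_antisymm ?_ (iSup_le fun i => inf_le_inf (le_iSup a i) (le_iSup b i))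
  rw [iSup_inf_eq]
  refine iSup_le fun i => ?_
  rw [inf_iSup_eq]
  refine iSup_le fun j => ?_
  calc a i ⊓ b j ≤ a (max i j) ⊓ b (max i j) :=
        inf_le_inf (ha (le_max_left i j)) (hb (le_max_right i j))
    _ ≤ ⨆ r, a r ⊓ b r := le_iSup (fun r => a r ⊓ b r) (max i j)

/-- Finset.inf commutes with monotone ℕ-indexed sups in a frame. -/
lemma frame_finset_inf_iSup {α : Type*} [Order.Frame α] {ι : Type*} (s : Finset ι)
    (h : ι → ℕ → α) (hm : ∀ j, Monotone (h j)) :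
    (s.inf fun j => ⨆ r, h j r) = ⨆ r, s.inf fun j => h j r := by
  classical
  induction s using Finset.induction with
  | empty => simp
  | insert x s hx ih =>
    simp only [Finset.inf_insert]
    rw [ih, frame_iSup_inf_iSup (hm x) (fun r r' hr => Finset.inf_mono_fun fun j _ => hm j hr)]

/-- Finset.inf commutes with iInf (any complete lattice). -/
lemma finset_inf_iInf {α : Type*} [CompleteLattice α] {ι κ : Type*} [Nonempty ι]
    (s : Finset κ) (g : κ → ι → α) :
    (s.inf fun j => ⨅ i, g j i) = ⨅ i, s.inf fun j => g j i := by
  refine le_antisymm (le_iInf fun i => Finset.inf_mono_fun fun j _ => iInf_le _ i)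
    (Finset.le_inf fun j hj => le_iInf fun i => (iInf_le _ i).trans (Finset.inf_le hj))

lemma minMulVec_mono (M : Matrix (Fin n) (Fin k) (WithTop ℕ)) {x y : Fin k → WithTop ℕ}
    (h : x ≤ y) : minMulVec M x ≤ minMulVec M y := fun i =>
  Finset.inf_mono_fun fun j _ => add_le_add (le_refl _) (h j)

lemma minMulVec_iInf {ι : Type*} [Nonempty ι] (M : Matrix (Fin n) (Fin k) (WithTop ℕ))
    (x : ι → Fin k → WithTop ℕ) :
    minMulVec M (⨅ i, x i) = ⨅ i, minMulVec M (x i) := by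
  funext i0
  have : (fun j => M i0 j + (⨅ i, x i) j) = fun j => ⨅ i, (M i0 j + x i j) := by
    funext j
    rw [iInf_apply]
    exact wt_add_iInf _ _
  rw [show minMulVec M (⨅ i, x i) i0 = Finset.univ.inf fun j => M i0 j + (⨅ i, x i) j from rfl,
    this, finset_inf_iInf, iInf_apply]
  rfl

lemma minMulVec_iSup_mono (M : Matrix (Fin n) (Fin k) (WithTop ℕ))
    (x : ℕ → Fin k → WithTop ℕ) (hx : Monotone x) :
    minMulVec M (⨆ i, x i) = ⨆ i, minMulVec M (x i) := by
  funext i0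
  have h1 : (fun j => M i0 j + (⨆ i, x i) j) = fun j => ⨆ i, (M i0 j + x i j) := by
    funext j
    rw [iSup_apply]
    exact ENat.add_iSup _
  rw [show minMulVec M (⨆ i, x i) i0 = Finset.univ.inf fun j => M i0 j + (⨆ i, x i) j from rfl,
    h1, frame_finset_inf_iSup Finset.univ (fun j r => M i0 j + x r j)
      (fun j r r' hr => add_le_add (le_refl _) (hx hr j)), iSup_apply]
  rfl

end Aux2



section Main
open Classical
variable {n p q : ℕ} (A : Matrix (Fin n) (Fin n) (WithTop ℕ))
  (B : Matrix (Fin n) (Fin q) (WithTop ℕ))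

def InfC (X : Set (Fin n → WithTop ℕ)) : Prop :=
  ∀ f : ℕ → (Fin n → WithTop ℕ), (∀ r, f r ∈ X) → (⨅ r, f r) ∈ X

lemma im_infC (M : Matrix (Fin n) (Fin p) (WithTop ℕ)) :
    InfC {x | ∃ y : Fin p → WithTop ℕ, x = minMulVec M y} := by
  intro f hf
  choose y hy using hf
  refine ⟨⨅ r, y r, ?_⟩
  rw [minMulVec_iInf]
  exact iInf_congr hy

lemma im_supC (M : Matrix (Fin n) (Fin p) (WithTop ℕ)) (f : ℕ → Fin n → WithTop ℕ)
    (hmono : Monotone f) (hmem : ∀ r, ∃ y, f r = minMulVec M y) :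
    ∃ y, (⨆ r, f r) = minMulVec M y := by
  classical
  set S : ℕ → Set (Fin p → WithTop ℕ) := fun r => {y | f r ≤ minMulVec M y} with hS
  have hne : ∀ r, (S r).Nonempty := fun r => (hmem r).elim fun y hy => ⟨y, le_of_eq hy⟩
  haveI : ∀ r, Nonempty (S r) := fun r => (hne r).to_subtype
  set L : ℕ → Fin p → WithTop ℕ := fun r => ⨅ (y : S r), (y : Fin p → WithTop ℕ) with hL
  have hML : ∀ r, minMulVec M (L r) = f r := by
    intro r
    rw [hL]
    simp only
    rw [minMulVec_iInf]
    refine le_antisymm ?_ (le_iInf fun y => y.2)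
    obtain ⟨y0, hy0⟩ := hmem r
    calc (⨅ (y : S r), minMulVec M y.1) ≤ minMulVec M y0 := iInf_le _ (⟨y0, le_of_eq hy0⟩ : S r)
      _ = f r := hy0.symm
  have hLmono : Monotone L := by
    intro r r' hrr'
    refine le_iInf fun y => ?_
    exact iInf_le (fun (z : S r) => (z : Fin p → WithTop ℕ)) ⟨y.1, (hmono hrr').trans y.2⟩
  refine ⟨⨆ r, L r, ?_⟩
  rw [minMulVec_iSup_mono M L hLmono]
  exact (iSup_congr hML).symm

lemma phi_infC {X : Set (Fin n → WithTop ℕ)} (hX : InfC X) : InfC (PhiMin A B X) := by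
  intro f hf
  have h2 : ∀ r, ∃ z, minMulVec A (f r) ⊓ minMulVec B z ∈ X := by
    intro r
    obtain ⟨y, ⟨z, rfl⟩, hy⟩ := (hf r).2
    exact ⟨z, hy⟩
  choose u hu using h2
  refine ⟨hX f fun r => (hf r).1, ?_⟩
  refine ⟨minMulVec B (⨅ r, u r), ⟨⨅ r, u r, rfl⟩, ?_⟩
  rw [minMulVec_iInf A f, minMulVec_iInf B u, ← iInf_inf_eq]
  exact hX _ hu

lemma xseq_anti (K : Set (Fin n → WithTop ℕ)) : Antitone (XseqMin A B K) :=
  antitone_nat_of_succ_le fun _ => Set.inter_subset_left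

lemma xseq_infC (K : Set (Fin n → WithTop ℕ))
    (hfg : ∃ (p : ℕ) (Q : Matrix (Fin n) (Fin p) (WithTop ℕ)),
      K = {x | ∃ y : Fin p → WithTop ℕ, x = minMulVec Q y}) (r : ℕ) :
    InfC (XseqMin A B K r) := by
  obtain ⟨p, Q, hK⟩ := hfg
  induction r with
  | zero => rw [show XseqMin A B K 0 = K from rfl, hK]; exact im_infC Q
  | succ r ih => exact phi_infC A B ih

lemma sup_mem_xseq (K : Set (Fin n → WithTop ℕ))
    (hfg : ∃ (p : ℕ) (Q : Matrix (Fin n) (Fin p) (WithTop ℕ)),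
      K = {x | ∃ y : Fin p → WithTop ℕ, x = minMulVec Q y}) (t : ℕ) :
    ∀ f : ℕ → Fin n → WithTop ℕ, Monotone f →
      (∀ r, f r ∈ XseqMin A B K r) → (⨆ r, f r) ∈ XseqMin A B K t := by
  induction t with
  | zero =>
    intro f hmono hmem
    obtain ⟨p, Q, hK⟩ := hfg
    rw [show XseqMin A B K 0 = K from rfl, hK]
    exact im_supC Q f hmono fun r => by
      have := xseq_anti A B K (Nat.zero_le r) (hmem r)
      rw [show XseqMin A B K 0 = K from rfl, hK] at this
      exact this
  | succ t ih =>
    intro f hmono hmem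
    refine ⟨ih f hmono hmem, ?_⟩
    have h2 : ∀ r, ∃ z, minMulVec A (f (r+1)) ⊓ minMulVec B z ∈ XseqMin A B K r := by
      intro r
      obtain ⟨-, y, ⟨z, rfl⟩, hy⟩ := hmem (r+1)
      exact ⟨z, hy⟩
    choose u hu using h2
    set a : ℕ → Fin n → WithTop ℕ := fun r => minMulVec A (f (r+1)) with ha
    set b : ℕ → Fin n → WithTop ℕ := fun r => minMulVec B (u r) with hb
    set yhat : ℕ → Fin n → WithTop ℕ := fun r => ⨅ s, b (r + s) with hyhat
    have hamono : Monotone a := fun r r' h => minMulVec_mono A (hmono (by omega))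
    have hyhatmono : Monotone yhat := by
      intro r r' h
      refine le_iInf fun s => ?_
      have he : r' + s = r + (r' - r + s) := by omega
      rw [he]
      exact iInf_le _ _
    have hyhatIm : ∀ r, ∃ z, yhat r = minMulVec B z := by
      intro r
      refine ⟨⨅ s, u (r + s), ?_⟩
      rw [minMulVec_iInf]
    have hgmono : Monotone (fun r => a r ⊓ yhat r) :=
      fun r r' h => inf_le_inf (hamono h) (hyhatmono h)
    have hgeq : ∀ r, a r ⊓ yhat r = ⨅ s, (a (r+s) ⊓ b (r+s)) := by
      intro r
      refine le_antisymm
        (le_iInf fun s => inf_le_inf (hamono (Nat.le_add_right r s)) (iInf_le _ s)) ?_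
      refine le_inf ?_ (le_iInf fun s => (iInf_le _ s).trans inf_le_right)
      calc (⨅ s, (a (r+s) ⊓ b (r+s))) ≤ a (r+0) ⊓ b (r+0) := iInf_le _ 0
        _ ≤ a r := by rw [Nat.add_zero]; exact inf_le_left
    have hgmem : ∀ r, a r ⊓ yhat r ∈ XseqMin A B K r := by
      intro r
      rw [hgeq r]
      exact xseq_infC A B K hfg r _ fun s =>
        xseq_anti A B K (Nat.le_add_right r s) (hu (r+s))
    have hsupg : (⨆ r, a r ⊓ yhat r) ∈ XseqMin A B K t := ih _ hgmono hgmem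
    obtain ⟨z, hz⟩ := im_supC B yhat hyhatmono hyhatIm
    refine ⟨⨆ r, yhat r, ⟨z, hz⟩, ?_⟩
    have hAf : minMulVec A (⨆ r, f r) = ⨆ r, a r := by
      rw [minMulVec_iSup_mono A f hmono]
      refine le_antisymm
        (iSup_le fun r => (minMulVec_mono A (hmono (Nat.le_succ r))).trans (le_iSup a r))
        (iSup_le fun r => le_iSup (fun r => minMulVec A (f r)) (r+1))
    rw [hAf, frame_iSup_inf_iSup hamono hyhatmono]
    exact hsupg

lemma xomega_inv (K : Set (Fin n → WithTop ℕ))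
    (hfg : ∃ (p : ℕ) (Q : Matrix (Fin n) (Fin p) (WithTop ℕ)),
      K = {x | ∃ y : Fin p → WithTop ℕ, x = minMulVec Q y})
    (x : Fin n → WithTop ℕ) (hx : x ∈ ⋂ r, XseqMin A B K r) :
    ∃ u, minMulVec A x ⊓ minMulVec B u ∈ ⋂ r, XseqMin A B K r := by
  have hxr : ∀ r, x ∈ XseqMin A B K r := fun r => Set.mem_iInter.mp hx r
  have h2 : ∀ r, ∃ z, minMulVec A x ⊓ minMulVec B z ∈ XseqMin A B K r := by
    intro r
    obtain ⟨-, y, ⟨z, rfl⟩, hy⟩ := hxr (r+1)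
    exact ⟨z, hy⟩
  choose u hu using h2
  set b : ℕ → Fin n → WithTop ℕ := fun r => minMulVec B (u r) with hb
  set yhat : ℕ → Fin n → WithTop ℕ := fun r => ⨅ s, b (r + s) with hyhat
  have hyhatmono : Monotone yhat := by
    intro r r' h
    refine le_iInf fun s => ?_
    have he : r' + s = r + (r' - r + s) := by omega
    rw [he]
    exact iInf_le _ _
  have hyhatIm : ∀ r, ∃ z, yhat r = minMulVec B z := by
    intro r
    refine ⟨⨅ s, u (r + s), ?_⟩
    rw [minMulVec_iInf]
  have hgmono : Monotone (fun r => minMulVec A x ⊓ yhat r) :=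
    fun r r' h => inf_le_inf le_rfl (hyhatmono h)
  have hgeq : ∀ r, minMulVec A x ⊓ yhat r = ⨅ s, (minMulVec A x ⊓ b (r+s)) := by
    intro r
    refine le_antisymm (le_iInf fun s => inf_le_inf le_rfl (iInf_le _ s)) ?_
    exact le_inf ((iInf_le _ 0).trans inf_le_left)
      (le_iInf fun s => (iInf_le _ s).trans inf_le_right)
  have hgmem : ∀ r, minMulVec A x ⊓ yhat r ∈ XseqMin A B K r := by
    intro r
    rw [hgeq r]
    exact xseq_infC A B K hfg r _ fun s =>
      xseq_anti A B K (Nat.le_add_right r s) (hu (r+s))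
  obtain ⟨z, hz⟩ := im_supC B yhat hyhatmono hyhatIm
  refine ⟨z, Set.mem_iInter.mpr fun t => ?_⟩
  have key : minMulVec A x ⊓ minMulVec B z = ⨆ r, (minMulVec A x ⊓ yhat r) := by
    rw [← hz, inf_iSup_eq]
  rw [key]
  exact sup_mem_xseq A B K hfg t _ hgmono hgmem

end Main



private theorem kstarMin_eq_xomega_aux {n q : ℕ} (K : Set (Fin n → WithTop ℕ))
    (hfg : ∃ (p : ℕ) (Q : Matrix (Fin n) (Fin p) (WithTop ℕ)),
      K = {x | ∃ y : Fin p → WithTop ℕ, x = minMulVec Q y})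
    (A : Matrix (Fin n) (Fin n) (WithTop ℕ)) (B : Matrix (Fin n) (Fin q) (WithTop ℕ)) :
    KstarMin A B K = ⋂ r : ℕ, XseqMin A B K r := by
  classical
  apply Set.Subset.antisymm
  · rintro x₀ ⟨u, x, h0, hrec, hKmem⟩
    have main : ∀ r k, x k ∈ XseqMin A B K r := by
      intro r
      induction r with
      | zero => exact hKmem
      | succ r ih =>
        intro k
        exact ⟨ih k, minMulVec B (u (k+1)), ⟨u (k+1), rfl⟩, by
          rw [← hrec k]; exact ih (k+1)⟩
    exact Set.mem_iInter.mpr fun r => h0 ▸ main r 0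
  · intro x₀ hx₀
    have hstep : ∀ v : Fin n → WithTop ℕ, v ∈ (⋂ r, XseqMin A B K r) →
        ∃ u, minMulVec A v ⊓ minMulVec B u ∈ ⋂ r, XseqMin A B K r :=
      fun v hv => xomega_inv A B K hfg v hv
    let F : {v // v ∈ ⋂ r, XseqMin A B K r} → {v // v ∈ ⋂ r, XseqMin A B K r} :=
      fun v => ⟨minMulVec A v.1 ⊓ minMulVec B (Classical.choose (hstep v.1 v.2)),
        Classical.choose_spec (hstep v.1 v.2)⟩
    let seq : ℕ → {v // v ∈ ⋂ r, XseqMin A B K r} := fun k => F^[k] ⟨x₀, hx₀⟩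
    refine ⟨fun k => Nat.casesOn k (fun _ => (⊤ : WithTop ℕ))
      (fun k' => Classical.choose (hstep (seq k').1 (seq k').2)),
      fun k => (seq k).1, rfl, fun k => ?_, fun k => ?_⟩
    · have hs : seq (k+1) = F (seq k) := Function.iterate_succ_apply' F k _
      exact congrArg Subtype.val hs
    · exact Set.mem_iInter.mp (seq k).2 0


/-- For a finitely generated subsemimodule `K ⊆ ℕ_min^n` and all matrices `A`, `B`,
the maximal geometrically `(A,B)`-invariant semimodule `K*` contained in `K` equals
`X_ω = ⋂_r X_r`, where `X₁ = K` and `X_{r+1} = φ(X_r)`. -/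
theorem kstarMin_eq_xomega {n q : ℕ} (K : Set (Fin n → WithTop ℕ))
    (hK : IsSubsemimoduleMin K)
    (hfg : ∃ (p : ℕ) (Q : Matrix (Fin n) (Fin p) (WithTop ℕ)),
      K = {x | ∃ y : Fin p → WithTop ℕ, x = minMulVec Q y})
    (A : Matrix (Fin n) (Fin n) (WithTop ℕ)) (B : Matrix (Fin n) (Fin q) (WithTop ℕ)) :
    KstarMin A B K = ⋂ r : ℕ, XseqMin A B K r :=
  kstarMin_eq_xomega_aux K hfg A B
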